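/- Let u : (F_q^k \ {0}) → F_q^m be a function such that for all linearly independent α, β ∈ F_q^k, we have u(α) + u(β) = 2·u(α+β). Suppose q ≥ 5 and k ≥ 2. Then u is constant on F_q^k \ {0}. -/
import Mathlib

theorem stmt_13 (q k m : ℕ) [Fact q.Prime] (hq : 5 ≤ q) (hk : 2 ≤ k)
    (u : (Fin k → ZMod q) → Fin m → ZMod q)
    (h : ∀ α β : Fin k → ZMod q, LinearIndependent (ZMod q) ![α, β] →
      u α + u β = 2 • u (α + β)) :
    ∀ α β : Fin k → ZMod q, α ≠ 0 → β ≠ 0 → u α = u β := by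
  have key : ∀ α β : Fin k → ZMod q, LinearIndependent (ZMod q) ![α, β] → u α = u β := by
    intro α β hab
    have hpair := LinearIndependent.pair_iff.mp hab
    have h1 : LinearIndependent (ZMod q) ![α + β, β] := by
      refine LinearIndependent.pair_iff.mpr fun s t hst => ?_
      have h0 : s • α + (s + t) • β = 0 := by rw [← hst]; module
      obtain ⟨hs, hst'⟩ := hpair _ _ h0
      exact ⟨hs, by simpa [hs] using hst'⟩
    have h2 : LinearIndependent (ZMod q) ![α, α + β] := by
      refine LinearIndependent.pair_iff.mpr fun s t hst => ?_
      have h0 : (s + t) • α + t • β = 0 := by rw [← hst]; module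
      obtain ⟨hst', ht⟩ := hpair _ _ h0
      exact ⟨by simpa [ht] using hst', ht⟩
    have h3 : LinearIndependent (ZMod q) ![α + (α + β), β] := by
      refine LinearIndependent.pair_iff.mpr fun s t hst => ?_
      have h0 : (2 * s) • α + (s + t) • β = 0 := by rw [← hst]; module
      obtain ⟨hs2, hst'⟩ := hpair _ _ h0
      have hs : s = 0 := by
        have h2ne : (2 : ZMod q) ≠ 0 := by
          have : ((2 : ℕ) : ZMod q) ≠ 0 := by
            rw [Ne, ZMod.natCast_eq_zero_iff]
            intro hdvd
            have := Nat.le_of_dvd (by norm_num) hdvd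
            omega
          simpa using this
        exact (mul_eq_zero.mp hs2).resolve_left h2ne
      exact ⟨hs, by simpa [hs] using hst'⟩
    have h4 : LinearIndependent (ZMod q) ![α, α + β + β] := by
      refine LinearIndependent.pair_iff.mpr fun s t hst => ?_
      have h0 : (s + t) • α + (2 * t) • β = 0 := by rw [← hst]; module
      obtain ⟨hst', ht2⟩ := hpair _ _ h0
      have h2ne : (2 : ZMod q) ≠ 0 := by
        have : ((2 : ℕ) : ZMod q) ≠ 0 := by
          rw [Ne, ZMod.natCast_eq_zero_iff]
          intro hdvd
          have := Nat.le_of_dvd (by norm_num) hdvd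
          omega
        simpa using this
      have ht : t = 0 := (mul_eq_zero.mp ht2).resolve_left h2ne
      exact ⟨by simpa [ht] using hst', ht⟩
    have e1 := h α β hab
    have e2 := h (α + β) β h1
    have e3 := h α (α + β) h2
    have e4 := h (α + (α + β)) β h3
    have e5 := h α (α + β + β) h4
    have harg : α + (α + β) + β = α + (α + β + β) := by ring
    rw [harg] at e4
    simp only [two_smul] at e1 e2 e3 e4 e5
    linear_combination (norm := ring_nf) e2 - e3 - 2 * e4 + 2 * e5
  intro α β hα hβ
  by_cases hab : LinearIndependent (ZMod q) ![α, β]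
  · exact key α β hab
  · -- β = a • α with a ≠ 0
    rw [linearIndependent_fin2] at hab
    push_neg at hab
    simp only [Matrix.cons_val_one, Matrix.head_cons, Matrix.cons_val_zero] at hab
    obtain ⟨a, ha⟩ := hab hβ
    -- find γ ∉ span {β}
    have hne : (Submodule.span (ZMod q) {β} : Submodule (ZMod q) (Fin k → ZMod q)) ≠ ⊤ := by
      intro htop
      have h1 : Module.finrank (ZMod q) (Submodule.span (ZMod q) {β}) = 1 :=
        finrank_span_singleton hβ
      have h2 : Module.finrank (ZMod q) (Fin k → ZMod q) = k := Module.finrank_fin_fun _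
      rw [htop, finrank_top, h2] at h1
      omega
    obtain ⟨γ, hγ⟩ : ∃ γ, γ ∉ Submodule.span (ZMod q) {β} := by
      by_contra hcon
      push_neg at hcon
      exact hne (Submodule.eq_top_iff'.mpr hcon)
    have hβγ : LinearIndependent (ZMod q) ![β, γ] := by
      refine LinearIndependent.pair_iff.mpr fun s t hst => ?_
      by_cases ht : t = 0
      · refine ⟨?_, ht⟩
        rw [ht, zero_smul, add_zero, smul_eq_zero] at hst
        exact hst.resolve_right hβ
      · exfalso
        apply hγ
        have : γ = (-(t⁻¹ * s)) • β := by
          have h5 := congrArg (fun v => t⁻¹ • v) hst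
          simp only [smul_add, smul_smul, inv_mul_cancel₀ ht, one_smul, smul_zero] at h5
          rw [neg_smul]
          exact eq_neg_of_add_eq_zero_right h5
        rw [this]
        exact Submodule.smul_mem _ _ (Submodule.mem_span_singleton_self β)
    have hαγ : LinearIndependent (ZMod q) ![α, γ] := by
      refine LinearIndependent.pair_iff.mpr fun s t hst => ?_
      have hpairβγ := LinearIndependent.pair_iff.mp hβγ
      have h0 : (s * a) • β + t • γ = 0 := by
        rw [← hst, ← ha]; module
      obtain ⟨hsa, ht⟩ := hpairβγ _ _ h0
      have hane : a ≠ 0 := by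
        intro h0a
        rw [h0a, zero_smul] at ha
        exact hα ha.symm
      exact ⟨(mul_eq_zero.mp hsa).resolve_right hane, ht⟩
    rw [key α γ hαγ, key β γ hβγ]
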